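/- Let 𝒮 ⊂ ℳ be a (possibly infinite) set and let μ_B ∈ ℂ ∖ {0} for every B ∈ 𝒮, and define f: ℳ → ℂ by f(A) = ∑_{B ∈ 𝒮} μ_B ind(B, A) (for each A ∈ ℳ only finitely many summands are non-zero, so f is well-defined). Suppose f(A_1 ⊕ A_2) = f(A_1) + f(A_2) for any two matrices A_1, A_2 ∈ ℳ such that A_1 ⊕ A_2 is defined. Then every B ∈ 𝒮 is connected, i.e., cannot be written as B = B_1 ⊕ B_2 for some B_1, B_2 ∈ ℳ. -/
import Mathlib


/-- The class `ℳ` of integer matrices whose rows and columns are indexed by non-empty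
finite subsets `R, C ⊂ ℕ`, with no zero rows and no zero columns.  The entries are
encoded by a total function `ℕ → ℕ → ℤ` vanishing outside `R × C`. -/
structure MMat where
  R : Finset ℕ
  C : Finset ℕ
  hR : R.Nonempty
  hC : C.Nonempty
  entry : ℕ → ℕ → ℤ
  supp : ∀ i j, entry i j ≠ 0 → i ∈ R ∧ j ∈ C
  noZeroRow : ∀ i ∈ R, ∃ j ∈ C, entry i j ≠ 0
  noZeroCol : ∀ j ∈ C, ∃ i ∈ R, entry i j ≠ 0

namespace MMat

open Classical in
/-- The finite set `X_A` of (5.1.2): vectors `(ξ_j : j ∈ C)` with `0 ≤ ξ_j ≤ ν_j` and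
`∑_{j ∈ C} A(i,j) ξ_j = 0` for all `i ∈ R`. -/
noncomputable def solSet (A : MMat) (ν : ℕ → ℕ) : Finset ((j : ℕ) → j ∈ A.C → ℕ) :=
  (A.C.pi fun j => Finset.range (ν j + 1)).filter
    (fun ξ => ∀ i ∈ A.R, ∑ j ∈ A.C.attach, A.entry i j.1 * (ξ j.1 j.2 : ℤ) = 0)

/-- The polynomial `w(X_A; ζ) = ∑_{x ∈ X_A} ∏_{j ∈ C} (ζ w_j)^{ξ_j}` of (5.1.3),
as a polynomial in `ζ`. -/
noncomputable def wPoly (A : MMat) (w : ℕ → ℂ) (ν : ℕ → ℕ) : Polynomial ℂ :=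
  ∑ ξ ∈ A.solSet ν, ∏ j ∈ A.C.attach, (Polynomial.C (w j.1) * Polynomial.X) ^ (ξ j.1 j.2)

/-- The power sums `σ_k(A, w, ν) = ζ_1^{-k} + ⋯ + ζ_d^{-k}` of (5.1.1), where
`ζ_1, …, ζ_d` are the roots of `w(X_A; ζ)`, listed with multiplicity. -/
noncomputable def sigma (A : MMat) (w : ℕ → ℂ) (ν : ℕ → ℕ) (k : ℕ) : ℂ :=
  ((A.wPoly w ν).roots.map fun ζ => ζ⁻¹ ^ k).sum

/-- The direct sum `A₁ ⊕ A₂` of two matrices in `ℳ` with disjoint row index sets and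
disjoint column index sets. -/
def dsum (A₁ A₂ : MMat) (hR : Disjoint A₁.R A₂.R) (hC : Disjoint A₁.C A₂.C) : MMat where
  R := A₁.R ∪ A₂.R
  C := A₁.C ∪ A₂.C
  hR := A₁.hR.mono Finset.subset_union_left
  hC := A₁.hC.mono Finset.subset_union_left
  entry := fun i j => A₁.entry i j + A₂.entry i j
  supp := by
    intro i j h
    by_cases h₁ : A₁.entry i j = 0
    · have h₂ : A₂.entry i j ≠ 0 := by
        intro h₂; exact h (by simp [h₁, h₂])
      obtain ⟨hi, hj⟩ := A₂.supp i j h₂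
      exact ⟨Finset.mem_union_right _ hi, Finset.mem_union_right _ hj⟩
    · obtain ⟨hi, hj⟩ := A₁.supp i j h₁
      exact ⟨Finset.mem_union_left _ hi, Finset.mem_union_left _ hj⟩
  noZeroRow := by
    intro i hi
    rcases Finset.mem_union.mp hi with hi₁ | hi₂
    · obtain ⟨j, hj, hne⟩ := A₁.noZeroRow i hi₁
      refine ⟨j, Finset.mem_union_left _ hj, ?_⟩
      have h₂ : A₂.entry i j = 0 := by
        by_contra h₂
        exact Finset.disjoint_left.mp hR hi₁ (A₂.supp i j h₂).1
      simpa [h₂] using hne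
    · obtain ⟨j, hj, hne⟩ := A₂.noZeroRow i hi₂
      refine ⟨j, Finset.mem_union_right _ hj, ?_⟩
      have h₁ : A₁.entry i j = 0 := by
        by_contra h₁
        exact Finset.disjoint_left.mp hR (A₁.supp i j h₁).1 hi₂
      simpa [h₁] using hne
  noZeroCol := by
    intro j hj
    rcases Finset.mem_union.mp hj with hj₁ | hj₂
    · obtain ⟨i, hi, hne⟩ := A₁.noZeroCol j hj₁
      refine ⟨i, Finset.mem_union_left _ hi, ?_⟩
      have h₂ : A₂.entry i j = 0 := by
        by_contra h₂
        exact Finset.disjoint_left.mp hR hi (A₂.supp i j h₂).1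
      simpa [h₂] using hne
    · obtain ⟨i, hi, hne⟩ := A₂.noZeroCol j hj₂
      refine ⟨i, Finset.mem_union_right _ hi, ?_⟩
      have h₁ : A₁.entry i j = 0 := by
        by_contra h₁
        exact Finset.disjoint_left.mp hR (A₁.supp i j h₁).1 hi
      simpa [h₁] using hne

open Classical in
/-- The index `ind(B, A)` of Section 5.1: `ind(B, A) = 1` if `R₁ ⊆ R`, `C₁ ⊆ C`,
`A` agrees with `B` on `R₁ × C₁` and `A` vanishes on `(R ∖ R₁) × C₁`; otherwise `0`. -/
noncomputable def ind (B A : MMat) : ℂ :=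
  if B.R ⊆ A.R ∧ B.C ⊆ A.C ∧ (∀ i ∈ B.R, ∀ j ∈ B.C, A.entry i j = B.entry i j) ∧
      (∀ i ∈ A.R, i ∉ B.R → ∀ j ∈ B.C, A.entry i j = 0)
    then 1 else 0

open Classical in
/-- The connected sum `B₁ # B₂`: the matrix equal to `B₁` on `R₁ × C₁`, to `B₂` on
`R₂ × C₂`, and zero elsewhere (well-defined when the restrictions of `B₁` and `B₂` to
`(R₁ ∩ R₂) × (C₁ ∩ C₂)` coincide). -/
noncomputable def csum (B₁ B₂ : MMat) : MMat where
  R := B₁.R ∪ B₂.R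
  C := B₁.C ∪ B₂.C
  hR := B₁.hR.mono Finset.subset_union_left
  hC := B₁.hC.mono Finset.subset_union_left
  entry := fun i j => if i ∈ B₁.R ∧ j ∈ B₁.C then B₁.entry i j else B₂.entry i j
  supp := by
    intro i j h
    by_cases h₁ : i ∈ B₁.R ∧ j ∈ B₁.C
    · exact ⟨Finset.mem_union_left _ h₁.1, Finset.mem_union_left _ h₁.2⟩
    · have h' : B₂.entry i j ≠ 0 := by simpa [if_neg h₁] using h
      obtain ⟨hi, hj⟩ := B₂.supp i j h'
      exact ⟨Finset.mem_union_right _ hi, Finset.mem_union_right _ hj⟩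
  noZeroRow := by
    intro i hi
    by_cases hi₁ : i ∈ B₁.R
    · obtain ⟨j, hj, hne⟩ := B₁.noZeroRow i hi₁
      exact ⟨j, Finset.mem_union_left _ hj, by simpa [hi₁, hj] using hne⟩
    · have hi₂ : i ∈ B₂.R := by
        rcases Finset.mem_union.mp hi with h | h
        · exact absurd h hi₁
        · exact h
      obtain ⟨j, hj, hne⟩ := B₂.noZeroRow i hi₂
      exact ⟨j, Finset.mem_union_right _ hj, by simpa [hi₁] using hne⟩
  noZeroCol := by
    intro j hj
    by_cases hj₁ : j ∈ B₁.C
    · obtain ⟨i, hi, hne⟩ := B₁.noZeroCol j hj₁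
      exact ⟨i, Finset.mem_union_left _ hi, by simpa [hi, hj₁] using hne⟩
    · have hj₂ : j ∈ B₂.C := by
        rcases Finset.mem_union.mp hj with h | h
        · exact absurd h hj₁
        · exact h
      obtain ⟨i, hi, hne⟩ := B₂.noZeroCol j hj₂
      exact ⟨i, Finset.mem_union_right _ hi, by simpa [hj₁] using hne⟩

/-- A matrix `B ∈ ℳ` is connected if it cannot be written as a direct sum
`B = B₁ ⊕ B₂` of two matrices in `ℳ`. -/
def Connected (B : MMat) : Prop :=
  ¬ ∃ (B₁ B₂ : MMat) (h₁ : Disjoint B₁.R B₂.R) (h₂ : Disjoint B₁.C B₂.C),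
      B = dsum B₁ B₂ h₁ h₂

end MMat


namespace MMat

lemma ext' (A B : MMat) (hR : A.R = B.R) (hC : A.C = B.C) (he : A.entry = B.entry) :
    A = B := by
  cases A; cases B; cases hR; cases hC; cases he; rfl

lemma entry_zero_of_R {A : MMat} {i j : ℕ} (h : i ∉ A.R) : A.entry i j = 0 := by
  by_contra h'; exact h (A.supp i j h').1

lemma entry_zero_of_C {A : MMat} {i j : ℕ} (h : j ∉ A.C) : A.entry i j = 0 := by
  by_contra h'; exact h (A.supp i j h').2

lemma ind_ne_zero_iff (B A : MMat) :
    ind B A ≠ 0 ↔ (B.R ⊆ A.R ∧ B.C ⊆ A.C ∧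
      (∀ i ∈ B.R, ∀ j ∈ B.C, A.entry i j = B.entry i j) ∧
      (∀ i ∈ A.R, i ∉ B.R → ∀ j ∈ B.C, A.entry i j = 0)) := by
  unfold ind; split <;> simp_all

lemma ind_eq_zero_or_one (B A : MMat) : ind B A = 0 ∨ ind B A = 1 := by
  unfold ind; split <;> simp

lemma ind_eq_one_of_ne_zero {B A : MMat} (h : ind B A ≠ 0) : ind B A = 1 :=
  (ind_eq_zero_or_one B A).resolve_left h

lemma ind_self (B : MMat) : ind B B ≠ 0 := by
  rw [ind_ne_zero_iff]
  exact ⟨le_refl _, le_refl _, fun _ _ _ _ => rfl, fun i _ hi j hj => (hi ‹_›).elim⟩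

lemma eq_of_ind_full {B A : MMat} (h : ind B A ≠ 0) (hR : B.R = A.R) (hC : B.C = A.C) :
    B = A := by
  rw [ind_ne_zero_iff] at h
  obtain ⟨-, -, hagree, -⟩ := h
  refine ext' B A hR hC ?_
  funext i j
  by_cases hi : i ∈ B.R
  · by_cases hj : j ∈ B.C
    · exact (hagree i hi j hj).symm
    · rw [entry_zero_of_C hj, entry_zero_of_C (hC ▸ hj)]
  · rw [entry_zero_of_R hi, entry_zero_of_R (hR ▸ hi)]

section DSum

variable {A₁ A₂ : MMat} (h₁ : Disjoint A₁.R A₂.R) (h₂ : Disjoint A₁.C A₂.C)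

lemma ind_dsum_left {B : MMat} (h : ind B A₁ ≠ 0) :
    ind B (dsum A₁ A₂ h₁ h₂) ≠ 0 ∧ ind B A₂ = 0 := by
  rw [ind_ne_zero_iff] at h
  obtain ⟨hRs, hCs, hagree, hzero⟩ := h
  constructor
  · rw [ind_ne_zero_iff]
    refine ⟨hRs.trans Finset.subset_union_left, hCs.trans Finset.subset_union_left, ?_, ?_⟩
    · intro i hi j hj
      show A₁.entry i j + A₂.entry i j = B.entry i j
      rw [entry_zero_of_R (Finset.disjoint_left.mp h₁ (hRs hi)), add_zero]
      exact hagree i hi j hj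
    · intro i hi hni j hj
      show A₁.entry i j + A₂.entry i j = 0
      rcases Finset.mem_union.mp hi with hi1 | hi2
      · rw [hzero i hi1 hni j hj,
          entry_zero_of_C (Finset.disjoint_left.mp h₂ (hCs hj)), add_zero]
      · rw [entry_zero_of_R (Finset.disjoint_right.mp h₁ hi2),
          entry_zero_of_C (Finset.disjoint_left.mp h₂ (hCs hj)), add_zero]
  · by_contra h'
    have h'' := (ind_ne_zero_iff _ _).mp h'
    obtain ⟨j, hj⟩ := B.hC
    exact Finset.disjoint_left.mp h₂ (hCs hj) (h''.2.1 hj)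

lemma ind_dsum_right {B : MMat} (h : ind B A₂ ≠ 0) :
    ind B (dsum A₁ A₂ h₁ h₂) ≠ 0 ∧ ind B A₁ = 0 := by
  rw [ind_ne_zero_iff] at h
  obtain ⟨hRs, hCs, hagree, hzero⟩ := h
  constructor
  · rw [ind_ne_zero_iff]
    refine ⟨hRs.trans Finset.subset_union_right, hCs.trans Finset.subset_union_right, ?_, ?_⟩
    · intro i hi j hj
      show A₁.entry i j + A₂.entry i j = B.entry i j
      rw [entry_zero_of_R (Finset.disjoint_right.mp h₁ (hRs hi)), zero_add]
      exact hagree i hi j hj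
    · intro i hi hni j hj
      show A₁.entry i j + A₂.entry i j = 0
      rcases Finset.mem_union.mp hi with hi1 | hi2
      · rw [entry_zero_of_R (Finset.disjoint_left.mp h₁ hi1),
          entry_zero_of_C (Finset.disjoint_right.mp h₂ (hCs hj)), add_zero]
      · rw [hzero i hi2 hni j hj,
          entry_zero_of_C (Finset.disjoint_right.mp h₂ (hCs hj)), add_zero]
  · by_contra h'
    have h'' := (ind_ne_zero_iff _ _).mp h'
    obtain ⟨j, hj⟩ := B.hC
    exact Finset.disjoint_right.mp h₂ (hCs hj) (h''.2.1 hj)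

/-- A matrix genuinely split across a direct sum is disconnected. -/
lemma not_connected_of_split {B : MMat} (h : ind B (dsum A₁ A₂ h₁ h₂) ≠ 0)
    (hz1 : ind B A₁ = 0) (hz2 : ind B A₂ = 0) : ¬ Connected B := by
  rw [ind_ne_zero_iff] at h
  obtain ⟨hRs, hCs, hagree, hzero⟩ := h
  have hAentry : ∀ i j, (dsum A₁ A₂ h₁ h₂).entry i j = A₁.entry i j + A₂.entry i j :=
    fun _ _ => rfl
  have linkR : ∀ i ∈ B.R, ∀ j ∈ B.C, j ∈ A₁.C → B.entry i j ≠ 0 → i ∈ A₁.R := by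
    intro i hi j hj hj1 hne
    rcases Finset.mem_union.mp (hRs hi) with h' | h'
    · exact h'
    · exact absurd (by
        rw [← hagree i hi j hj, hAentry,
          entry_zero_of_R (Finset.disjoint_right.mp h₁ h'),
          entry_zero_of_C (Finset.disjoint_left.mp h₂ hj1), add_zero]) hne
  have linkC : ∀ i ∈ B.R, ∀ j ∈ B.C, i ∈ A₁.R → B.entry i j ≠ 0 → j ∈ A₁.C := by
    intro i hi j hj hi1 hne
    rcases Finset.mem_union.mp (hCs hj) with h' | h'
    · exact h'
    · exact absurd (by
        rw [← hagree i hi j hj, hAentry,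
          entry_zero_of_C (Finset.disjoint_right.mp h₂ h'),
          entry_zero_of_R (Finset.disjoint_left.mp h₁ hi1), zero_add]) hne
  have linkR2 : ∀ i ∈ B.R, ∀ j ∈ B.C, j ∈ A₂.C → B.entry i j ≠ 0 → i ∈ A₂.R := by
    intro i hi j hj hj2 hne
    rcases Finset.mem_union.mp (hRs hi) with h' | h'
    · exact absurd (by
        rw [← hagree i hi j hj, hAentry,
          entry_zero_of_C (Finset.disjoint_right.mp h₂ hj2),
          entry_zero_of_R (Finset.disjoint_left.mp h₁ h'), add_zero]) hne
    · exact h'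
  have linkC2 : ∀ i ∈ B.R, ∀ j ∈ B.C, i ∈ A₂.R → B.entry i j ≠ 0 → j ∈ A₂.C := by
    intro i hi j hj hi2 hne
    rcases Finset.mem_union.mp (hCs hj) with h' | h'
    · exact absurd (by
        rw [← hagree i hi j hj, hAentry,
          entry_zero_of_R (Finset.disjoint_right.mp h₁ hi2),
          entry_zero_of_C (Finset.disjoint_left.mp h₂ h'), add_zero]) hne
    · exact h'
  have sub2 : B.R ∩ A₁.R = ∅ → False := by
    intro hemp
    have hR2 : ∀ i ∈ B.R, i ∈ A₂.R := by
      intro i hi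
      rcases Finset.mem_union.mp (hRs hi) with h' | h'
      · exact absurd (Finset.mem_inter.mpr ⟨hi, h'⟩) (by simp [hemp])
      · exact h'
    have hC2 : ∀ j ∈ B.C, j ∈ A₂.C := by
      intro j hj
      obtain ⟨i, hi, hne⟩ := B.noZeroCol j hj
      exact linkC2 i hi j hj (hR2 i hi) hne
    have : ind B A₂ ≠ 0 := by
      rw [ind_ne_zero_iff]
      refine ⟨fun i hi => hR2 i hi, fun j hj => hC2 j hj, ?_, ?_⟩
      · intro i hi j hj
        have h' := hagree i hi j hj
        rw [hAentry, entry_zero_of_R (Finset.disjoint_right.mp h₁ (hR2 i hi)),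
          zero_add] at h'
        exact h'
      · intro i hi hni j hj
        have h' := hzero i (Finset.mem_union_right _ hi) hni j hj
        rwa [hAentry, entry_zero_of_R (Finset.disjoint_right.mp h₁ hi), zero_add] at h'
    exact this hz2
  have sub1 : B.R ∩ A₂.R = ∅ → False := by
    intro hemp
    have hR1 : ∀ i ∈ B.R, i ∈ A₁.R := by
      intro i hi
      rcases Finset.mem_union.mp (hRs hi) with h' | h'
      · exact h'
      · exact absurd (Finset.mem_inter.mpr ⟨hi, h'⟩) (by simp [hemp])
    have hC1 : ∀ j ∈ B.C, j ∈ A₁.C := by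
      intro j hj
      obtain ⟨i, hi, hne⟩ := B.noZeroCol j hj
      exact linkC i hi j hj (hR1 i hi) hne
    have : ind B A₁ ≠ 0 := by
      rw [ind_ne_zero_iff]
      refine ⟨fun i hi => hR1 i hi, fun j hj => hC1 j hj, ?_, ?_⟩
      · intro i hi j hj
        have h' := hagree i hi j hj
        rw [hAentry, entry_zero_of_R (Finset.disjoint_left.mp h₁ (hR1 i hi)),
          add_zero] at h'
        exact h'
      · intro i hi hni j hj
        have h' := hzero i (Finset.mem_union_left _ hi) hni j hj
        rwa [hAentry, entry_zero_of_R (Finset.disjoint_left.mp h₁ hi), add_zero] at h'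
    exact this hz1
  have hne1 : (B.R ∩ A₁.R).Nonempty := Finset.nonempty_iff_ne_empty.mpr sub2
  have hne2 : (B.R ∩ A₂.R).Nonempty := Finset.nonempty_iff_ne_empty.mpr sub1
  have hneC1 : (B.C ∩ A₁.C).Nonempty := by
    obtain ⟨i, hi⟩ := hne1
    obtain ⟨hiB, hi1⟩ := Finset.mem_inter.mp hi
    obtain ⟨j, hj, hne⟩ := B.noZeroRow i hiB
    exact ⟨j, Finset.mem_inter.mpr ⟨hj, linkC i hiB j hj hi1 hne⟩⟩
  have hneC2 : (B.C ∩ A₂.C).Nonempty := by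
    obtain ⟨i, hi⟩ := hne2
    obtain ⟨hiB, hi2⟩ := Finset.mem_inter.mp hi
    obtain ⟨j, hj, hne⟩ := B.noZeroRow i hiB
    exact ⟨j, Finset.mem_inter.mpr ⟨hj, linkC2 i hiB j hj hi2 hne⟩⟩
  intro hconn
  apply hconn
  have d1 : Disjoint (B.R ∩ A₁.R) (B.R ∩ A₂.R) :=
    Disjoint.mono Finset.inter_subset_right Finset.inter_subset_right h₁
  have d2 : Disjoint (B.C ∩ A₁.C) (B.C ∩ A₂.C) :=
    Disjoint.mono Finset.inter_subset_right Finset.inter_subset_right h₂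
  refine ⟨{ R := B.R ∩ A₁.R, C := B.C ∩ A₁.C, hR := hne1, hC := hneC1,
            entry := fun i j => if i ∈ A₁.R ∧ j ∈ A₁.C then B.entry i j else 0,
            supp := ?_, noZeroRow := ?_, noZeroCol := ?_ },
    { R := B.R ∩ A₂.R, C := B.C ∩ A₂.C, hR := hne2, hC := hneC2,
      entry := fun i j => if i ∈ A₂.R ∧ j ∈ A₂.C then B.entry i j else 0,
      supp := ?_, noZeroRow := ?_, noZeroCol := ?_ }, d1, d2, ?_⟩
  · intro i j h'
    replace h' : (if i ∈ A₁.R ∧ j ∈ A₁.C then B.entry i j else 0) ≠ 0 := h'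
    by_cases hc : i ∈ A₁.R ∧ j ∈ A₁.C
    · rw [if_pos hc] at h'
      exact ⟨Finset.mem_inter.mpr ⟨(B.supp i j h').1, hc.1⟩,
        Finset.mem_inter.mpr ⟨(B.supp i j h').2, hc.2⟩⟩
    · rw [if_neg hc] at h'
      exact absurd rfl h'
  · intro i hi
    obtain ⟨hiB, hi1⟩ := Finset.mem_inter.mp hi
    obtain ⟨j, hj, hne⟩ := B.noZeroRow i hiB
    have hj1 := linkC i hiB j hj hi1 hne
    exact ⟨j, Finset.mem_inter.mpr ⟨hj, hj1⟩, by show (if i ∈ A₁.R ∧ j ∈ A₁.C then B.entry i j else 0) ≠ 0; rw [if_pos ⟨hi1, hj1⟩]; exact hne⟩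
  · intro j hj
    obtain ⟨hjB, hj1⟩ := Finset.mem_inter.mp hj
    obtain ⟨i, hi, hne⟩ := B.noZeroCol j hjB
    have hi1 := linkR i hi j hjB hj1 hne
    exact ⟨i, Finset.mem_inter.mpr ⟨hi, hi1⟩, by show (if i ∈ A₁.R ∧ j ∈ A₁.C then B.entry i j else 0) ≠ 0; rw [if_pos ⟨hi1, hj1⟩]; exact hne⟩
  · intro i j h'
    replace h' : (if i ∈ A₂.R ∧ j ∈ A₂.C then B.entry i j else 0) ≠ 0 := h'
    by_cases hc : i ∈ A₂.R ∧ j ∈ A₂.C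
    · rw [if_pos hc] at h'
      exact ⟨Finset.mem_inter.mpr ⟨(B.supp i j h').1, hc.1⟩,
        Finset.mem_inter.mpr ⟨(B.supp i j h').2, hc.2⟩⟩
    · rw [if_neg hc] at h'
      exact absurd rfl h'
  · intro i hi
    obtain ⟨hiB, hi2⟩ := Finset.mem_inter.mp hi
    obtain ⟨j, hj, hne⟩ := B.noZeroRow i hiB
    have hj2 := linkC2 i hiB j hj hi2 hne
    exact ⟨j, Finset.mem_inter.mpr ⟨hj, hj2⟩, by show (if i ∈ A₂.R ∧ j ∈ A₂.C then B.entry i j else 0) ≠ 0; rw [if_pos ⟨hi2, hj2⟩]; exact hne⟩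
  · intro j hj
    obtain ⟨hjB, hj2⟩ := Finset.mem_inter.mp hj
    obtain ⟨i, hi, hne⟩ := B.noZeroCol j hjB
    have hi2 := linkR2 i hi j hjB hj2 hne
    exact ⟨i, Finset.mem_inter.mpr ⟨hi, hi2⟩, by show (if i ∈ A₂.R ∧ j ∈ A₂.C then B.entry i j else 0) ≠ 0; rw [if_pos ⟨hi2, hj2⟩]; exact hne⟩
  · apply ext'
    · show B.R = (B.R ∩ A₁.R) ∪ (B.R ∩ A₂.R)
      rw [← Finset.inter_union_distrib_left]
      exact (Finset.inter_eq_left.mpr hRs).symm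
    · show B.C = (B.C ∩ A₁.C) ∪ (B.C ∩ A₂.C)
      rw [← Finset.inter_union_distrib_left]
      exact (Finset.inter_eq_left.mpr hCs).symm
    · funext i j
      show B.entry i j = (if i ∈ A₁.R ∧ j ∈ A₁.C then B.entry i j else 0) +
        (if i ∈ A₂.R ∧ j ∈ A₂.C then B.entry i j else 0)
      by_cases hz : B.entry i j = 0
      · split_ifs <;> simp [hz]
      · obtain ⟨hiB, hjB⟩ := B.supp i j hz
        rcases Finset.mem_union.mp (hRs hiB) with hi1 | hi2
        · have hj1 := linkC i hiB j hjB hi1 hz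
          rw [if_pos ⟨hi1, hj1⟩,
            if_neg (fun hc : i ∈ A₂.R ∧ j ∈ A₂.C =>
              Finset.disjoint_left.mp h₁ hi1 hc.1), add_zero]
        · have hj2 := linkC2 i hiB j hjB hi2 hz
          rw [if_neg (fun hc : i ∈ A₁.R ∧ j ∈ A₁.C =>
              Finset.disjoint_right.mp h₁ hi2 hc.1),
            if_pos ⟨hi2, hj2⟩, zero_add]

end DSum

end MMat

/-- **Lemma 5.4.** Let `𝒮 ⊆ ℳ` and `μ_B ≠ 0` for `B ∈ 𝒮`, and let
`f(A) = ∑_{B ∈ 𝒮} μ_B ind(B, A)` (for each `A ∈ ℳ` only finitely many summands are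
non-zero).  If `f(A₁ ⊕ A₂) = f(A₁) + f(A₂)` whenever `A₁ ⊕ A₂` is defined, then every
`B ∈ 𝒮` is connected. -/
theorem stmt19 (S : Set MMat) (μ : MMat → ℂ) (hμ : ∀ B ∈ S, μ B ≠ 0)
    (hfin : ∀ A : MMat, {B : MMat | B ∈ S ∧ MMat.ind B A ≠ 0}.Finite)
    (f : MMat → ℂ)
    (hf : ∀ A : MMat, f A = ∑ᶠ (B : MMat) (_ : B ∈ S), μ B * MMat.ind B A)
    (hadd : ∀ (A₁ A₂ : MMat) (h₁ : Disjoint A₁.R A₂.R) (h₂ : Disjoint A₁.C A₂.C),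
      f (MMat.dsum A₁ A₂ h₁ h₂) = f A₁ + f A₂) :
    ∀ B ∈ S, MMat.Connected B := by
  have key : ∀ n, ∀ B ∈ S, B.R.card + B.C.card = n → MMat.Connected B := by
    intro n
    induction n using Nat.strong_induction_on with
    | _ n IH =>
    intro B hB hcard hdisc
    obtain ⟨B₁, B₂, d₁, d₂, hEq⟩ := hdisc
    set A := MMat.dsum B₁ B₂ d₁ d₂ with hAdef
    have hTfin : ({B' | B' ∈ S ∧ MMat.ind B' A ≠ 0} ∪
        ({B' | B' ∈ S ∧ MMat.ind B' B₁ ≠ 0} ∪ {B' | B' ∈ S ∧ MMat.ind B' B₂ ≠ 0})).Finite :=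
      (hfin A).union ((hfin B₁).union (hfin B₂))
    set T := hTfin.toFinset with hTdef
    have hTS : ↑T ⊆ S := by
      intro x hx
      rw [hTdef, Set.Finite.coe_toFinset] at hx
      rcases hx with h | h | h <;> exact h.1
    have hsum : ∀ X : MMat, {B' | B' ∈ S ∧ MMat.ind B' X ≠ 0} ⊆ ↑T →
        f X = ∑ B' ∈ T, μ B' * MMat.ind B' X := by
      intro X hX
      rw [hf X]
      refine finsum_mem_eq_sum_of_subset _ ?_ hTS
      intro x hx
      refine hX ⟨hx.1, fun h0 => Function.mem_support.mp hx.2 ?_⟩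
      simp [h0]
    have hsubA : {B' | B' ∈ S ∧ MMat.ind B' A ≠ 0} ⊆ ↑T := by
      rw [hTdef, Set.Finite.coe_toFinset]
      exact Set.subset_union_left
    have hsub1 : {B' | B' ∈ S ∧ MMat.ind B' B₁ ≠ 0} ⊆ ↑T := by
      rw [hTdef, Set.Finite.coe_toFinset]
      exact fun x hx => Set.mem_union_right _ (Set.mem_union_left _ hx)
    have hsub2 : {B' | B' ∈ S ∧ MMat.ind B' B₂ ≠ 0} ⊆ ↑T := by
      rw [hTdef, Set.Finite.coe_toFinset]
      exact fun x hx => Set.mem_union_right _ (Set.mem_union_right _ hx)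
    have heq0 : ∑ B' ∈ T, μ B' * (MMat.ind B' A - MMat.ind B' B₁ - MMat.ind B' B₂) = 0 := by
      have h' := hadd B₁ B₂ d₁ d₂
      rw [← hAdef] at h'
      rw [hsum A hsubA, hsum B₁ hsub1, hsum B₂ hsub2] at h'
      simp only [mul_sub]
      rw [Finset.sum_sub_distrib, Finset.sum_sub_distrib, h']
      ring
    have hBT : B ∈ T := by
      rw [hTdef, Set.Finite.mem_toFinset]
      exact Or.inl ⟨hB, by rw [← hEq]; exact MMat.ind_self B⟩
    have hothers : ∀ b ∈ T, b ≠ B →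
        μ b * (MMat.ind b A - MMat.ind b B₁ - MMat.ind b B₂) = 0 := by
      intro b hbT hne
      have hbS : b ∈ S := hTS hbT
      by_cases hb1 : MMat.ind b B₁ = 0
      · by_cases hb2 : MMat.ind b B₂ = 0
        · by_cases hbA : MMat.ind b A = 0
          · rw [hb1, hb2, hbA]; ring
          · exfalso
            have hnc := MMat.not_connected_of_split d₁ d₂ hbA hb1 hb2
            have hsub := (MMat.ind_ne_zero_iff b A).mp hbA
            have hRsub : b.R ⊆ B.R := by rw [hEq]; exact hsub.1
            have hCsub : b.C ⊆ B.C := by rw [hEq]; exact hsub.2.1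
            have hneq : b.R ≠ B.R ∨ b.C ≠ B.C := by
              by_contra hctr
              push_neg at hctr
              refine hne ?_
              rw [hEq] at hctr
              rw [hEq]
              exact MMat.eq_of_ind_full hbA hctr.1 hctr.2
            have hlt : b.R.card + b.C.card < n := by
              rcases hneq with h' | h'
              · have h1 := Finset.card_lt_card (hRsub.ssubset_of_ne h')
                have h2 := Finset.card_le_card hCsub
                omega
              · have h1 := Finset.card_le_card hRsub
                have h2 := Finset.card_lt_card (hCsub.ssubset_of_ne h')
                omega
            exact hnc (IH _ hlt b hbS rfl)
        · obtain ⟨hA', h1'⟩ := MMat.ind_dsum_right d₁ d₂ hb2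
          rw [MMat.ind_eq_one_of_ne_zero hA', MMat.ind_eq_one_of_ne_zero hb2, h1']
          ring
      · obtain ⟨hA', h2'⟩ := MMat.ind_dsum_left d₁ d₂ hb1
        rw [MMat.ind_eq_one_of_ne_zero hA', MMat.ind_eq_one_of_ne_zero hb1, h2']
        ring
    have hBzero1 : MMat.ind B B₁ = 0 := by
      by_contra h'
      have hCsub := ((MMat.ind_ne_zero_iff B B₁).mp h').2.1
      obtain ⟨j, hj⟩ := B₂.hC
      have hjB : j ∈ B.C := by rw [hEq]; exact Finset.mem_union_right _ hj
      exact Finset.disjoint_right.mp d₂ hj (hCsub hjB)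
    have hBzero2 : MMat.ind B B₂ = 0 := by
      by_contra h'
      have hCsub := ((MMat.ind_ne_zero_iff B B₂).mp h').2.1
      obtain ⟨j, hj⟩ := B₁.hC
      have hjB : j ∈ B.C := by rw [hEq]; exact Finset.mem_union_left _ hj
      exact Finset.disjoint_left.mp d₂ hj (hCsub hjB)
    have hfinal : μ B * (MMat.ind B A - MMat.ind B B₁ - MMat.ind B B₂) = 0 :=
      (Finset.sum_eq_single_of_mem B hBT hothers).symm.trans heq0
    have hiBA : MMat.ind B A = 1 :=
      MMat.ind_eq_one_of_ne_zero (by rw [← hEq]; exact MMat.ind_self B)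
    rw [hiBA, hBzero1, hBzero2] at hfinal
    simp at hfinal
    exact hμ B hB hfinal
  exact fun B hB => key _ B hB rfl
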